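/- Degree bound on the Hermite form: if A ∈ S^{n×n} has full row rank with deg_D A_{ij} ≤ d for all i,j, then its Hermite form H satisfies deg_D H_{ij} ≤ n·d for all i, j. -/

import Mathlib

/-- Abstract presentation of a skew (Ore/differential) polynomial ring `S = K[D; δ]`:
`S` is a ring containing `K` via `ι`, with a distinguished element `D` satisfying the
commutation rule `D * a = a * D + δ a`, and every element of `S` is (uniquely) a finite
sum `∑ aₙ Dⁿ`, with coefficients `coeff` supported on `supp`. -/
structure DiffPolyRing (K : Type) [CommRing K] (S : Type) [Ring S] (δ : K → K) where
  ι : K →+* S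
  D : S
  comm_rule : ∀ a : K, D * ι a = ι a * D + ι (δ a)
  coeff : S → ℕ → K
  supp : S → Finset ℕ
  mem_supp : ∀ f n, n ∈ supp f ↔ coeff f n ≠ 0
  coeff_add : ∀ f g n, coeff (f + g) n = coeff f n + coeff g n
  coeff_ext : ∀ f g : S, (∀ n, coeff f n = coeff g n) → f = g
  coeff_monomial : ∀ (a : K) (i n : ℕ), coeff (ι a * D ^ i) n = if n = i then a else 0
  repr_sum : ∀ f : S, f = ∑ n ∈ supp f, ι (coeff f n) * D ^ n

namespace DiffPolyRing

variable {K S : Type} [CommRing K] [Ring S] {δ : K → K}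

/-- Degree in the variable `D`, with `degD 0 = ⊥` (i.e. `-∞`). -/
noncomputable def degD (R : DiffPolyRing K S δ) (f : S) : WithBot ℕ := (R.supp f).max

/-- Degree in `D` as a natural number (`0` for the zero polynomial). -/
noncomputable def natDegD (R : DiffPolyRing K S δ) (f : S) : ℕ := (R.degD f).unbotD 0

/-- `f` is monic: its leading coefficient (in `D`) is `1`. -/
noncomputable def Monic (R : DiffPolyRing K S δ) (f : S) : Prop :=
  R.coeff f (R.natDegD f) = 1

/-- `H` is in Hermite form: upper triangular, monic diagonal entries, and each
off-diagonal entry has `D`-degree strictly less than the diagonal entry below it. -/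
noncomputable def HermiteForm (R : DiffPolyRing K S δ) {n : ℕ}
    (H : Matrix (Fin n) (Fin n) S) : Prop :=
  (∀ i j, j < i → H i j = 0) ∧ (∀ i, R.Monic (H i i)) ∧
    (∀ i j, i < j → R.degD (H i j) < R.degD (H j j))

/-- The rows of `A` are left `S`-linearly independent. -/
def FullRowRank {n : ℕ} (A : Matrix (Fin n) (Fin n) S) : Prop :=
  ∀ c : Fin n → S, (∀ j, (∑ i, c i * A i j) = 0) → c = 0

end DiffPolyRing

namespace DiffPolyRing

variable {K S : Type} [CommRing K] [Ring S] {δ : K → K} (R : DiffPolyRing K S δ)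

lemma coeff_zero (n : ℕ) : R.coeff 0 n = 0 := by
  have := R.coeff_add 0 0 n
  rw [add_zero] at this
  have h2 : R.coeff 0 n + 0 = R.coeff 0 n + R.coeff 0 n := by rw [add_zero]; exact this
  exact (add_left_cancel h2).symm

lemma ext_zero {f : S} (h : ∀ n, R.coeff f n = 0) : f = 0 :=
  R.coeff_ext f 0 (fun n => by rw [h n, R.coeff_zero])

lemma coeff_neg (f : S) (n : ℕ) : R.coeff (-f) n = - R.coeff f n := by
  have := R.coeff_add f (-f) n
  rw [add_neg_cancel, R.coeff_zero] at this
  exact eq_neg_of_add_eq_zero_right this.symm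

lemma coeff_sum {α : Type*} (s : Finset α) (f : α → S) (n : ℕ) :
    R.coeff (∑ a ∈ s, f a) n = ∑ a ∈ s, R.coeff (f a) n := by
  classical
  induction s using Finset.induction_on with
  | empty => simp [R.coeff_zero]
  | insert _ _ h ih => simp [Finset.sum_insert h, R.coeff_add, ih]

lemma coeff_not_mem {f : S} {n : ℕ} (h : n ∉ R.supp f) : R.coeff f n = 0 := by
  by_contra hc; exact h ((R.mem_supp f n).2 hc)

lemma coeff_iotaMul (a : K) (f : S) (n : ℕ) :
    R.coeff (R.ι a * f) n = a * R.coeff f n := by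
  conv_lhs => rw [R.repr_sum f, Finset.mul_sum]
  have : ∀ k, R.ι a * (R.ι (R.coeff f k) * R.D ^ k) = R.ι (a * R.coeff f k) * R.D ^ k := by
    intro k; rw [← mul_assoc, ← map_mul]
  simp_rw [this, R.coeff_sum, R.coeff_monomial]
  rw [Finset.sum_ite_eq (R.supp f) n]
  split
  · rfl
  · next h => rw [R.coeff_not_mem h, mul_zero]

lemma coeff_mul_Dpow (f : S) (l n : ℕ) :
    R.coeff (f * R.D ^ l) n = if l ≤ n then R.coeff f (n - l) else 0 := by
  conv_lhs => rw [R.repr_sum f, Finset.sum_mul]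
  have : ∀ k, R.ι (R.coeff f k) * R.D ^ k * R.D ^ l = R.ι (R.coeff f k) * R.D ^ (k + l) := by
    intro k; rw [mul_assoc, ← pow_add]
  simp_rw [this, R.coeff_sum, R.coeff_monomial]
  by_cases h : l ≤ n
  · rw [if_pos h, Finset.sum_eq_single (n - l)]
    · rw [if_pos (by omega)]
    · intro b _ hb; rw [if_neg (by omega)]
    · intro hnm; rw [if_pos (by omega), R.coeff_not_mem hnm]
  · rw [if_neg h]
    apply Finset.sum_eq_zero
    intro k _
    rw [if_neg (by omega)]

lemma coeff_D_mul (hδ0 : δ 0 = 0) (f : S) (n : ℕ) :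
    R.coeff (R.D * f) n = (if n = 0 then 0 else R.coeff f (n - 1)) + δ (R.coeff f n) := by
  conv_lhs => rw [R.repr_sum f, Finset.mul_sum]
  have key : ∀ k, R.D * (R.ι (R.coeff f k) * R.D ^ k)
      = R.ι (R.coeff f k) * R.D ^ (k + 1) + R.ι (δ (R.coeff f k)) * R.D ^ k := by
    intro k
    rw [← mul_assoc, R.comm_rule, add_mul, mul_assoc, ← pow_succ']
  simp_rw [key, R.coeff_sum, R.coeff_add, R.coeff_monomial, Finset.sum_add_distrib]
  congr 1
  · by_cases h : n = 0
    · rw [if_pos h]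
      apply Finset.sum_eq_zero
      intro k _
      rw [if_neg (by omega)]
    · rw [if_neg h, Finset.sum_eq_single (n - 1)]
      · rw [if_pos (by omega)]
      · intro b _ hb; rw [if_neg (by omega)]
      · intro hnm; rw [if_pos (by omega), R.coeff_not_mem hnm]
  · rw [Finset.sum_ite_eq (R.supp f) n]
    split
    · rfl
    · next h => rw [R.coeff_not_mem h, hδ0]

/-- Degree-bound predicate: all coefficients from `m` on vanish. -/
def DegLT (R : DiffPolyRing K S δ) (m : ℕ) (f : S) : Prop := ∀ k, m ≤ k → R.coeff f k = 0

lemma degLT_D_mul (hδ0 : δ 0 = 0) {m : ℕ} {f : S} (hf : R.DegLT m f) :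
    R.DegLT (m + 1) (R.D * f) := by
  intro k hk
  rw [R.coeff_D_mul hδ0, hf k (by omega), hδ0, if_neg (by omega), hf (k-1) (by omega), add_zero]

lemma Dpow_mul_iota (hδ0 : δ 0 = 0) (m : ℕ) (b : K) {k : ℕ} (hk : m ≤ k) :
    R.coeff (R.D ^ m * R.ι b) k = if k = m then b else 0 := by
  induction m generalizing k with
  | zero =>
    rw [pow_zero, one_mul]
    have : R.ι b = R.ι b * R.D ^ 0 := by rw [pow_zero, mul_one]
    rw [this, R.coeff_monomial]
  | succ m ih =>
    have : R.D ^ (m+1) * R.ι b = R.D * (R.D ^ m * R.ι b) := by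
      rw [← mul_assoc, ← pow_succ']
    rw [this, R.coeff_D_mul hδ0]
    rw [ih (by omega : m ≤ k), ih (by omega : m ≤ k - 1)]
    have h1 : (if k = m then b else 0) = 0 := by rw [if_neg (by omega)]
    rw [h1, hδ0, add_zero, if_neg (by omega : ¬ k = 0)]
    by_cases h : k = m + 1
    · rw [if_pos (by omega), if_pos h]
    · rw [if_neg (by omega), if_neg h]

lemma coeff_mono_mul (hδ0 : δ 0 = 0) (a b : K) (m l : ℕ) {k : ℕ} (hk : m + l ≤ k) :
    R.coeff ((R.ι a * R.D ^ m) * (R.ι b * R.D ^ l)) k = if k = m + l then a * b else 0 := by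
  have : (R.ι a * R.D ^ m) * (R.ι b * R.D ^ l) = R.ι a * ((R.D ^ m * R.ι b) * R.D ^ l) := by
    simp only [mul_assoc]
  rw [this, R.coeff_iotaMul, R.coeff_mul_Dpow, if_pos (by omega : l ≤ k),
    R.Dpow_mul_iota hδ0 m b (by omega : m ≤ k - l)]
  by_cases h : k = m + l
  · rw [if_pos (by omega), if_pos h, mul_comm a b]  -- K comm
  · rw [if_neg (by omega), if_neg h, mul_zero]

lemma degLT_mul (hδ0 : δ 0 = 0) {mf mg : ℕ} {f g : S}
    (hf : R.DegLT (mf + 1) f) (hg : R.DegLT (mg + 1) g) : R.DegLT (mf + mg + 1) (f * g) := by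
  intro k hk
  conv_lhs => rw [R.repr_sum f, R.repr_sum g, Finset.sum_mul]
  simp_rw [Finset.mul_sum]
  rw [R.coeff_sum]
  apply Finset.sum_eq_zero
  intro i hi
  rw [R.coeff_sum]
  apply Finset.sum_eq_zero
  intro j hj
  have hi' : i ≤ mf := by
    by_contra hc
    exact ((R.mem_supp f i).1 hi) (hf i (by omega))
  have hj' : j ≤ mg := by
    by_contra hc
    exact ((R.mem_supp g j).1 hj) (hg j (by omega))
  rw [R.coeff_mono_mul hδ0 _ _ _ _ (by omega : i + j ≤ k), if_neg (by omega)]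

lemma supp_nonempty_of_ne_zero {f : S} (hf : f ≠ 0) : (R.supp f).Nonempty := by
  by_contra h
  rw [Finset.not_nonempty_iff_eq_empty] at h
  exact hf (R.ext_zero (fun n => R.coeff_not_mem (h ▸ Finset.notMem_empty n)))

lemma degD_eq_natDegD {f : S} (hf : f ≠ 0) : R.degD f = (R.natDegD f : WithBot ℕ) := by
  obtain ⟨a, ha⟩ := Finset.max_of_nonempty (R.supp_nonempty_of_ne_zero hf)
  have h1 : R.degD f = (a : WithBot ℕ) := ha
  have h2 : R.natDegD f = a := by rw [natDegD, h1]; rfl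
  rw [h1, h2]

lemma natDegD_mem_supp {f : S} (hf : f ≠ 0) : R.natDegD f ∈ R.supp f := by
  have hne := R.supp_nonempty_of_ne_zero hf
  have h1 : R.degD f = ((R.supp f).max' hne : WithBot ℕ) := (Finset.coe_max' hne).symm
  have h2 : R.natDegD f = (R.supp f).max' hne := by rw [natDegD, h1]; rfl
  rw [h2]; exact Finset.max'_mem _ _

lemma lc_ne_zero {f : S} (hf : f ≠ 0) : R.coeff f (R.natDegD f) ≠ 0 :=
  (R.mem_supp f _).1 (R.natDegD_mem_supp hf)

lemma le_natDegD_of_mem {f : S} {m : ℕ} (hm : m ∈ R.supp f) : m ≤ R.natDegD f := by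
  have hf : f ≠ 0 := by
    intro h; subst h
    exact (R.mem_supp 0 m).1 hm (R.coeff_zero m)
  have h2 := Finset.le_max hm
  rw [show (R.supp f).max = R.degD f from rfl, R.degD_eq_natDegD hf] at h2
  exact WithBot.coe_le_coe.mp h2

lemma degLT_of_natDegD {f : S} : R.DegLT (R.natDegD f + 1) f := by
  intro k hk
  by_contra hc
  have := R.le_natDegD_of_mem ((R.mem_supp f k).2 hc)
  omega

lemma coeff_mul_lead (hδ0 : δ 0 = 0) {f g : S} (hf : f ≠ 0) (hg : g ≠ 0) :
    R.coeff (f * g) (R.natDegD f + R.natDegD g)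
      = R.coeff f (R.natDegD f) * R.coeff g (R.natDegD g) := by
  set nf := R.natDegD f with hnf
  set ng := R.natDegD g with hng
  conv_lhs => rw [R.repr_sum f, R.repr_sum g, Finset.sum_mul]
  simp_rw [Finset.mul_sum]
  rw [R.coeff_sum, Finset.sum_eq_single nf]
  · rw [R.coeff_sum, Finset.sum_eq_single ng]
    · rw [R.coeff_mono_mul hδ0 _ _ _ _ (le_refl _), if_pos rfl]
    · intro j hj hjne
      have := R.le_natDegD_of_mem hj
      rw [R.coeff_mono_mul hδ0 _ _ _ _ (by omega), if_neg (by omega)]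
    · intro h; exact absurd (R.natDegD_mem_supp hg) h
  · intro i hi hine
    have hile := R.le_natDegD_of_mem hi
    rw [R.coeff_sum]
    apply Finset.sum_eq_zero
    intro j hj
    have := R.le_natDegD_of_mem hj
    rw [R.coeff_mono_mul hδ0 _ _ _ _ (by omega), if_neg (by omega)]
  · intro h; exact absurd (R.natDegD_mem_supp hf) h

lemma coeff_finSum (N : ℕ) (b : Fin N → K) (k : ℕ) :
    R.coeff (∑ m : Fin N, R.ι (b m) * R.D ^ (m : ℕ)) k
      = if h : k < N then b ⟨k, h⟩ else 0 := by
  rw [R.coeff_sum]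
  simp_rw [R.coeff_monomial]
  by_cases h : k < N
  · rw [dif_pos h]
    rw [Finset.sum_eq_single (⟨k, h⟩ : Fin N)]
    · rw [if_pos rfl]
    · intro m _ hm
      rw [if_neg (fun he => hm (Fin.ext he.symm))]
    · intro hmem; exact absurd (Finset.mem_univ _) hmem
  · rw [dif_neg h]
    apply Finset.sum_eq_zero
    intro m _
    rw [if_neg (by intro he; subst he; exact h m.isLt)]

lemma degLT_finSum (N : ℕ) (b : Fin N → K) : R.DegLT N (∑ m : Fin N, R.ι (b m) * R.D ^ (m : ℕ)) := by
  intro k hk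
  rw [R.coeff_finSum, dif_neg (by omega)]

lemma degLT_of_degD_le {f : S} {d : ℕ} (h : R.degD f ≤ (d : WithBot ℕ)) :
    R.DegLT (d + 1) f := by
  intro k hk
  apply R.coeff_not_mem
  intro hmem
  have h2 := Finset.le_max hmem
  rw [← Nat.cast_withBot] at h2
  have h3 : ((k : ℕ) : WithBot ℕ) ≤ (d : WithBot ℕ) := le_trans h2 h
  have h4 : k ≤ d := by exact_mod_cast h3
  omega

lemma degD_le_of_degLT {f : S} {d : ℕ} (h : R.DegLT (d + 1) f) :
    R.degD f ≤ (d : WithBot ℕ) := by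
  apply Finset.max_le
  intro k hk
  have : k ≤ d := by
    by_contra hc
    exact (R.mem_supp f k).1 hk (h k (by omega))
  rw [← Nat.cast_withBot]
  exact Nat.cast_le.mpr this

lemma degD_zero : R.degD (0 : S) = ⊥ := by
  rw [degD, Finset.max_eq_bot, Finset.eq_empty_iff_forall_notMem]
  intro k hk
  exact (R.mem_supp 0 k).1 hk (R.coeff_zero k)

end DiffPolyRing

set_option synthInstance.maxHeartbeats 1000000 in
set_option maxHeartbeats 1000000 in
open DiffPolyRing in
/-- if `A` has full row rank and `deg_D A_{ij} ≤ d`, then its Hermite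
form `H` satisfies `deg_D H_{ij} ≤ n·d`. -/
theorem degD_hermite_form_le
    {F : Type} [Field F] [CharZero F] {S : Type} [Ring S]
    (δ : RatFunc F → RatFunc F)
    (hδadd : ∀ a b : RatFunc F, δ (a + b) = δ a + δ b)
    (hδmul : ∀ a b : RatFunc F, δ (a * b) = a * δ b + δ a * b)
    (R : DiffPolyRing (RatFunc F) S δ) {n : ℕ}
    (A U H : Matrix (Fin n) (Fin n) S) (d : ℕ)
    (hA : DiffPolyRing.FullRowRank A)
    (hdeg : ∀ i j, R.degD (A i j) ≤ (d : WithBot ℕ))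
    (hU : IsUnit U) (hUA : U * A = H) (hH : R.HermiteForm H) :
    ∀ i j, R.degD (H i j) ≤ ((n * d : ℕ) : WithBot ℕ) := by

  classical
  have hδ0 : δ 0 = 0 := by
    have h := hδadd 0 0
    rw [add_zero] at h
    have h2 : δ 0 + 0 = δ 0 + δ 0 := by rw [add_zero]; exact h
    exact (add_left_cancel h2).symm
  obtain ⟨hHtri, hHmonic, hHdeg⟩ := hH
  set dd : Fin n → ℕ := fun j => R.natDegD (H j j) with hdd
  have hHjj_ne : ∀ j, H j j ≠ 0 := by
    intro j h0
    have hm := hHmonic j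
    rw [Monic, h0, R.coeff_zero] at hm
    exact one_ne_zero hm.symm
  set M : ℕ := ∑ j, dd j with hM
  set N' : ℕ := M + 1 with hN'
  set N : ℕ := N' + d with hN
  -- the matrix V with V * U = 1
  obtain ⟨u, hu⟩ := hU
  set V : Matrix (Fin n) (Fin n) S := Units.val u⁻¹ with hV
  have hVU : V * U = 1 := by rw [hV, ← hu]; exact u.inv_mul
  have hVH : ∀ i j, ∑ p, V i p * H p j = A i j := by
    intro i j
    have hVHA : V * H = A := by rw [← hUA, ← mul_assoc, hVU, one_mul]
    rw [← Matrix.mul_apply, hVHA]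
  -- the linearly independent family
  set v : ((Fin n × Fin N') ⊕ ((j : Fin n) × Fin (dd j))) → ((Fin n × Fin N) → RatFunc F) :=
    Sum.elim
      (fun im => fun p => R.coeff (R.D ^ ((im.2 : ℕ)) * A im.1 p.1) (p.2 : ℕ))
      (fun jt => fun p => if p.1 = jt.1 ∧ (p.2 : ℕ) = (jt.2 : ℕ) then 1 else 0) with hv
  have hli : LinearIndependent (RatFunc F) v := by
    rw [Fintype.linearIndependent_iff]
    intro g hg
    set c : Fin n → S := fun i => ∑ m : Fin N', R.ι (g (Sum.inl (i, m))) * R.D ^ (m : ℕ) with hc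
    set w : Fin n → S := fun j => ∑ t : Fin (dd j), R.ι (g (Sum.inr ⟨j, t⟩)) * R.D ^ (t : ℕ) with hw
    have hcA : ∀ i j k, R.coeff (c i * A i j) k
        = ∑ m : Fin N', g (Sum.inl (i, m)) * R.coeff (R.D ^ (m : ℕ) * A i j) k := by
      intro i j k
      rw [hc]
      simp only []
      rw [Finset.sum_mul]
      simp_rw [mul_assoc]
      rw [R.coeff_sum]
      simp_rw [R.coeff_iotaMul]
    have hwc : ∀ (j : Fin n) (k : ℕ), R.coeff (w j) k
        = ∑ j₀ : Fin n, ∑ t : Fin (dd j₀),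
            g (Sum.inr ⟨j₀, t⟩) * (if j = j₀ ∧ k = (t : ℕ) then 1 else 0) := by
      intro j k
      rw [Finset.sum_eq_single j]
      · rw [hw]
        simp only []
        rw [R.coeff_finSum]
        by_cases h : k < dd j
        · rw [dif_pos h, Finset.sum_eq_single (⟨k, h⟩ : Fin (dd j))]
          · simp
          · intro t _ ht
            simp only [true_and]
            rw [if_neg (fun he => ht (Fin.ext he.symm)), mul_zero]
          · intro hmem; exact absurd (Finset.mem_univ _) hmem
        · rw [dif_neg h]
          apply (Finset.sum_eq_zero _).symm
          intro t _
          simp only [true_and]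
          rw [if_neg (fun he => h (by rw [he]; exact t.isLt)), mul_zero]
      · intro j₀ _ hj₀
        apply Finset.sum_eq_zero
        intro t _
        rw [if_neg (show ¬(j = j₀ ∧ k = (t : ℕ)) from fun hcond => hj₀ hcond.1.symm), mul_zero]
      · intro hmem; exact absurd (Finset.mem_univ _) hmem
    have hX : ∀ j : Fin n, (∑ i, c i * A i j) + w j = 0 := by
      intro j
      apply R.ext_zero
      intro k
      rw [R.coeff_add, R.coeff_sum]
      by_cases hk : k < N
      · have h0 := congrFun hg (j, (⟨k, hk⟩ : Fin N))
        rw [Finset.sum_apply] at h0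
        simp only [Pi.smul_apply, smul_eq_mul, Pi.zero_apply] at h0
        rw [Fintype.sum_sum_type] at h0
        have hvl : ∀ im : Fin n × Fin N', v (Sum.inl im) (j, (⟨k, hk⟩ : Fin N))
            = R.coeff (R.D ^ ((im.2 : ℕ)) * A im.1 j) k := fun im => rfl
        have hvr : ∀ jt : (j : Fin n) × Fin (dd j), v (Sum.inr jt) (j, (⟨k, hk⟩ : Fin N))
            = (if j = jt.1 ∧ k = (jt.2 : ℕ) then 1 else 0) := fun jt => rfl
        simp_rw [hvl, hvr] at h0
        rw [Fintype.sum_prod_type] at h0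
        rw [← h0]
        congr 1
        · apply Finset.sum_congr rfl
          intro i _
          rw [hcA]
        · rw [hwc]
          rw [Finset.sum_sigma']
          rfl
      · -- degree bound: every term has degree < N
        have h1 : ∀ i, R.coeff (c i * A i j) k = 0 := by
          intro i
          have hcd : R.DegLT (M + 1) (c i) := R.degLT_finSum N' _
          have had : R.DegLT (d + 1) (A i j) := R.degLT_of_degD_le (hdeg i j)
          have hprod := R.degLT_mul hδ0 hcd had
          exact hprod k (by omega)
        have h2 : R.coeff (w j) k = 0 := by
          have hwd : R.DegLT (dd j) (w j) := R.degLT_finSum (dd j) _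
          apply hwd
          have : dd j ≤ M := Finset.single_le_sum (fun _ _ => Nat.zero_le _) (Finset.mem_univ j)
          omega
        rw [h2, Finset.sum_eq_zero (fun i _ => h1 i), add_zero]
    -- pass to H
    set c' : Fin n → S := fun p => ∑ i, c i * V i p with hc'
    have hc'H : ∀ j, ∑ p, c' p * H p j = ∑ i, c i * A i j := by
      intro j
      rw [hc']
      simp only []
      simp_rw [Finset.sum_mul, mul_assoc]
      rw [Finset.sum_comm]
      simp_rw [← Finset.mul_sum, hVH]
    have hc'0 : ∀ p, c' p = 0 := by
      by_contra hcon
      push_neg at hcon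
      obtain ⟨p, hp⟩ := hcon
      have hne : (Finset.univ.filter (fun q => c' q ≠ 0)).Nonempty := by
        refine ⟨p, ?_⟩
        simp only [Finset.mem_filter, Finset.mem_univ, true_and]
        exact hp
      set p₀ := (Finset.univ.filter (fun q => c' q ≠ 0)).min' hne with hp₀
      have hp₀ne : c' p₀ ≠ 0 :=
        (Finset.mem_filter.1 ((Finset.univ.filter (fun q => c' q ≠ 0)).min'_mem hne)).2
      have hmin : ∀ q, q < p₀ → c' q = 0 := by
        intro q hq
        by_contra hqc
        have hle := Finset.min'_le (Finset.univ.filter (fun q => c' q ≠ 0)) q (by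
          simp only [Finset.mem_filter, Finset.mem_univ, true_and]; exact hqc)
        exact absurd hq (not_lt.2 hle)
      have heq : ∑ q, c' q * H q p₀ = c' p₀ * H p₀ p₀ := by
        rw [Finset.sum_eq_single p₀]
        · intro q _ hqne
          rcases lt_or_gt_of_ne hqne with h | h
          · rw [hmin q h, zero_mul]
          · rw [hHtri q p₀ h, mul_zero]
        · intro hmem; exact absurd (Finset.mem_univ _) hmem
      have hkey : c' p₀ * H p₀ p₀ = - w p₀ := by
        rw [← heq, hc'H p₀, eq_neg_iff_add_eq_zero]
        exact hX p₀
      -- leading coefficient contradiction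
      have hlead := R.coeff_mul_lead hδ0 hp₀ne (hHjj_ne p₀)
      have hmon : R.coeff (H p₀ p₀) (R.natDegD (H p₀ p₀)) = 1 := hHmonic p₀
      rw [hmon, mul_one] at hlead
      rw [hkey] at hlead
      have hwz : R.coeff (- w p₀) (R.natDegD (c' p₀) + R.natDegD (H p₀ p₀)) = 0 := by
        rw [R.coeff_neg]
        have hwd : R.DegLT (dd p₀) (w p₀) := R.degLT_finSum (dd p₀) _
        have hdd0 : dd p₀ = R.natDegD (H p₀ p₀) := rfl
        rw [hwd _ (by omega), neg_zero]
      rw [hwz] at hlead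
      exact R.lc_ne_zero hp₀ne hlead.symm
    have hcA0 : ∀ j, (∑ i, c i * A i j) = 0 := by
      intro j
      rw [← hc'H j]
      apply Finset.sum_eq_zero
      intro q _
      rw [hc'0 q, zero_mul]
    have hc0 : c = 0 := hA c hcA0
    have hw0 : ∀ j, w j = 0 := by
      intro j
      have := hX j
      rw [hcA0 j, zero_add] at this
      exact this
    intro x
    rcases x with ⟨i, m⟩ | ⟨j, t⟩
    · have : R.coeff (c i) (m : ℕ) = 0 := by
        rw [show c i = 0 from congrFun hc0 i, R.coeff_zero]
      rw [hc] at this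
      simp only [] at this
      rw [R.coeff_finSum] at this
      rw [dif_pos m.isLt] at this
      rw [← this]
    · have : R.coeff (w j) (t : ℕ) = 0 := by
        rw [hw0 j, R.coeff_zero]
      rw [hw] at this
      simp only [] at this
      rw [R.coeff_finSum] at this
      rw [dif_pos t.isLt] at this
      rw [← this]
  -- cardinality count
  have hcard := hli.fintype_card_le_finrank
  rw [Module.finrank_pi] at hcard
  simp only [Fintype.card_sum, Fintype.card_prod, Fintype.card_fin, Fintype.card_sigma] at hcard
  have hMnd : M ≤ n * d := by
    have h2 : n * N = n * N' + n * d := by rw [hN, Nat.mul_add]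
    have h3 : (∑ j : Fin n, dd j) = M := rfl
    rw [h3, h2] at hcard
    omega
  -- conclude
  have hdjle : ∀ j, dd j ≤ n * d := by
    intro j
    have : dd j ≤ M := Finset.single_le_sum (fun _ _ => Nat.zero_le _) (Finset.mem_univ j)
    omega
  have hdiag : ∀ j : Fin n, R.degD (H j j) ≤ ((n * d : ℕ) : WithBot ℕ) := by
    intro j
    rw [R.degD_eq_natDegD (hHjj_ne j)]
    exact_mod_cast hdjle j
  intro i j
  rcases lt_trichotomy i j with h | h | h
  · exact le_trans (le_of_lt (hHdeg i j h)) (hdiag j)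
  · subst h; exact hdiag i
  · rw [hHtri i j h, R.degD_zero]; exact bot_le
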